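/- For all nonnegative integers i, j and all real numbers k₁ and k₂, Σ_{r=j}^{i} binom(r,j)·k₂^{r-j}·c(i,r,k₁) = c(i,j,k₁-k₂). -/

import Mathlib

open Finset

/-- Signed Stirling numbers of the first kind, defined as the coefficients of the
falling factorial polynomial `x*(x-1)*...*(x-i+1) = sum_{r=0}^{i} s(i,r)*x^r`. -/
noncomputable def s (i r : ℕ) : ℝ := (descPochhammer ℝ i).coeff r

/-- Moment generating Stirling numbers of the first kind (MSN1):
`c(i,j,k) = sum_{r=j}^{i} binom(r,j)*(-k)^(r-j)*s(i,r)` (and `0` if `j > i`). -/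
noncomputable def c (i j : ℕ) (k : ℝ) : ℝ :=
  ∑ r ∈ Finset.Icc j i, (r.choose j : ℝ) * (-k) ^ (r - j) * s i r

lemma inner_vandermonde (j t : ℕ) (hjt : j ≤ t) (k₁ k₂ : ℝ) :
    ∑ r ∈ Finset.Icc j t,
      (r.choose j : ℝ) * k₂ ^ (r - j) * ((t.choose r : ℝ) * (-k₁) ^ (t - r)) =
      (t.choose j : ℝ) * (-(k₁ - k₂)) ^ (t - j) := by
  rw [show Finset.Icc j t = Finset.Ico j (t + 1) from rfl,
    Finset.sum_Ico_eq_sum_range]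
  have hrange : t + 1 - j = (t - j) + 1 := by omega
  rw [hrange]
  have key : ∀ m ∈ Finset.range (t - j + 1),
      ((j + m).choose j : ℝ) * k₂ ^ (j + m - j) *
        ((t.choose (j + m) : ℝ) * (-k₁) ^ (t - (j + m))) =
      (t.choose j : ℝ) * ((k₂ ^ m * (-k₁) ^ (t - j - m)) * ((t - j).choose m : ℝ)) := by
    intro m hm
    rw [Finset.mem_range] at hm
    have h1 : j + m ≤ t := by omega
    have h2 : (t.choose (j + m) : ℕ) * ((j + m).choose j) =
        t.choose j * ((t - j).choose m) := by
      have := Nat.choose_mul (n := t) (Nat.le_add_right j m)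
      simpa [Nat.add_sub_cancel_left] using this
    have h2' : (t.choose (j + m) : ℝ) * ((j + m).choose j : ℝ) =
        (t.choose j : ℝ) * ((t - j).choose m : ℝ) := by
      exact_mod_cast congrArg (Nat.cast (R := ℝ)) h2
    have h3 : j + m - j = m := by omega
    have h4 : t - (j + m) = t - j - m := by omega
    rw [h3, h4]
    linear_combination (k₂ ^ m * (-k₁) ^ (t - j - m)) * h2'
  rw [Finset.sum_congr rfl key, ← Finset.mul_sum, ← add_pow]
  ring_nf

/-- `sum_{r=j}^{i} binom(r,j)*k₂^(r-j)*c(i,r,k₁) = c(i,j,k₁-k₂)`. -/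
theorem msn1_param_shift (i j : ℕ) (k₁ k₂ : ℝ) :
    ∑ r ∈ Finset.Icc j i, (r.choose j : ℝ) * k₂ ^ (r - j) * c i r k₁ =
      c i j (k₁ - k₂) := by
  unfold c
  simp_rw [Finset.mul_sum]
  have hIcc : ∀ a b : ℕ, Finset.Icc a b = Finset.Ico a (b + 1) := fun a b => rfl
  calc
    ∑ r ∈ Finset.Icc j i, ∑ t ∈ Finset.Icc r i,
        (r.choose j : ℝ) * k₂ ^ (r - j) * ((t.choose r : ℝ) * (-k₁) ^ (t - r) * s i t)
      = ∑ t ∈ Finset.Icc j i, ∑ r ∈ Finset.Icc j t,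
        (r.choose j : ℝ) * k₂ ^ (r - j) * ((t.choose r : ℝ) * (-k₁) ^ (t - r) * s i t) := by
        simp_rw [hIcc]
        rw [Finset.sum_Ico_Ico_comm]
    _ = ∑ t ∈ Finset.Icc j i, (t.choose j : ℝ) * (-(k₁ - k₂)) ^ (t - j) * s i t := by
        refine Finset.sum_congr rfl fun t ht => ?_
        rw [Finset.mem_Icc] at ht
        have := inner_vandermonde j t ht.1 k₁ k₂
        calc ∑ r ∈ Finset.Icc j t,
              (r.choose j : ℝ) * k₂ ^ (r - j) * ((t.choose r : ℝ) * (-k₁) ^ (t - r) * s i t)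
            = (∑ r ∈ Finset.Icc j t,
              (r.choose j : ℝ) * k₂ ^ (r - j) * ((t.choose r : ℝ) * (-k₁) ^ (t - r))) * s i t := by
              rw [Finset.sum_mul]; exact Finset.sum_congr rfl fun r _ => by ring
          _ = (t.choose j : ℝ) * (-(k₁ - k₂)) ^ (t - j) * s i t := by rw [this]
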